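/- Let Q be a based groupoid quantale over a frame A, and let X be a supported Q-module. Then the following three conditions are equivalent: (1) ς_X(q·x) = ς_Q(q◃ς_X(x)) for all q ∈ Q and x ∈ X; (2) ς_X(q·x) ≤ ς_Q(q) for all q ∈ Q and x ∈ X (i.e., the support ς_X is stable); (3) ς_X(q·1_X) ≤ ς_Q(q) for all q ∈ Q. -/
import Mathlib


/-- A based groupoid quantale over a frame `A`: a frame `Q` (with top `1_Q`)
equipped with a sup-preserving associative multiplication, an involution,
unital left/right `A`-actions and an equivariant support `ς_Q : Q → A`. -/
structure BasedGroupoidQuantale (A : Type*) (Q : Type*)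
    [Order.Frame A] [Order.Frame Q] where
  mul : Q → Q → Q
  star : Q → Q
  lres : A → Q → Q          -- `a ▹ q`
  rres : Q → A → Q          -- `q ◃ a`
  suppQ : Q → A             -- `ς_Q`
  mul_assoc : ∀ p q r, mul (mul p q) r = mul p (mul q r)
  mul_sSup_left : ∀ (S : Set Q) (q : Q), mul (sSup S) q = ⨆ p ∈ S, mul p q
  mul_sSup_right : ∀ (p : Q) (S : Set Q), mul p (sSup S) = ⨆ q ∈ S, mul p q
  star_star : ∀ q, star (star q) = q
  star_mul : ∀ p q, star (mul p q) = mul (star q) (star p)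
  star_sSup : ∀ (S : Set Q), star (sSup S) = ⨆ q ∈ S, star q
  lres_top_act : ∀ q, lres ⊤ q = q
  rres_top_act : ∀ q, rres q ⊤ = q
  lres_sSup_left : ∀ (S : Set A) (q : Q), lres (sSup S) q = ⨆ a ∈ S, lres a q
  lres_sSup_right : ∀ (a : A) (S : Set Q), lres a (sSup S) = ⨆ q ∈ S, lres a q
  rres_sSup_left : ∀ (S : Set Q) (a : A), rres (sSup S) a = ⨆ q ∈ S, rres q a
  rres_sSup_right : ∀ (q : Q) (S : Set A), rres q (sSup S) = ⨆ a ∈ S, rres q a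
  lres_lres : ∀ a b q, lres a (lres b q) = lres (a ⊓ b) q
  lres_rres_comm : ∀ a q b, rres (lres a q) b = lres a (rres q b)
  lres_mul : ∀ a p q, mul (lres a p) q = lres a (mul p q)
  rres_mul : ∀ p a q, mul (rres p a) q = mul p (lres a q)
  mul_rres : ∀ p q a, rres (mul p q) a = mul p (rres q a)
  star_lres_rres : ∀ a q b, star (lres a (rres q b)) = lres b (rres (star q) a)
  lres_inf : ∀ a q m, lres a q ⊓ m = lres a (q ⊓ m)
  inf_rres : ∀ m q a, m ⊓ rres q a = rres (q ⊓ m) a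
  suppQ_sSup : ∀ (S : Set Q), suppQ (sSup S) = ⨆ q ∈ S, suppQ q
  suppQ_top : suppQ ⊤ = ⊤
  suppQ_le_mul : ∀ q p, lres (suppQ q) p ≤ mul (mul q (star q)) p
  suppQ_lres : ∀ q, lres (suppQ q) q = q
  suppQ_equivariant : ∀ a q, suppQ (lres a q) = a ⊓ suppQ q

/-- A pre-Hilbert `Q`-module: a frame `X` (with top `1_X`) with a sup-preserving
`Q`-action and a unital left `A`-action, equipped with an inner product. -/
structure PreHilbertModule {A Q : Type*} [Order.Frame A] [Order.Frame Q]
    (GQ : BasedGroupoidQuantale A Q) (X : Type*) [Order.Frame X] where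
  smul : Q → X → X          -- `q · x`
  lres : A → X → X          -- `a ▹ x`
  inner : X → X → Q         -- `⟨x, y⟩`
  smul_sSup_left : ∀ (S : Set Q) (x : X), smul (sSup S) x = ⨆ q ∈ S, smul q x
  smul_sSup_right : ∀ (q : Q) (S : Set X), smul q (sSup S) = ⨆ x ∈ S, smul q x
  mul_smul : ∀ p q x, smul (GQ.mul p q) x = smul p (smul q x)
  lres_top_act : ∀ x, lres ⊤ x = x
  lres_sSup_left : ∀ (S : Set A) (x : X), lres (sSup S) x = ⨆ a ∈ S, lres a x
  lres_sSup_right : ∀ (a : A) (S : Set X), lres a (sSup S) = ⨆ x ∈ S, lres a x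
  lres_lres : ∀ a b x, lres a (lres b x) = lres (a ⊓ b) x
  lresQ_smul : ∀ a q x, smul (GQ.lres a q) x = lres a (smul q x)
  rresQ_smul : ∀ q a x, smul (GQ.rres q a) x = smul q (lres a x)
  lres_inf : ∀ a (x y : X), lres a (x ⊓ y) = lres a x ⊓ y
  inner_smul : ∀ q x y, inner (smul q x) y = GQ.mul q (inner x y)
  lres_inner : ∀ a x, GQ.lres a (inner x ⊤) = inner (lres a x) ⊤
  inner_sSup : ∀ (S : Set X) (y : X), inner (sSup S) y = ⨆ x ∈ S, inner x y
  inner_star : ∀ x y, inner x y = GQ.star (inner y x)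

lemma mono_of_sSup_eq {α β : Type*} [CompleteLattice α] [CompleteLattice β] (f : α → β)
    (h : ∀ S : Set α, f (sSup S) = ⨆ a ∈ S, f a) : Monotone f := by
  intro a b hab
  have h2 := h {a, b}
  rw [sSup_pair, sup_eq_right.mpr hab] at h2
  have h3 : f a ≤ ⨆ x ∈ ({a, b} : Set α), f x :=
    le_biSup _ (Set.mem_insert a _)
  exact h3.trans_eq h2.symm

/-- Lemma 4.5: for a supported `Q`-module `X`, the following are equivalent:
(1) `ς_X(q·x) = ς_Q(q◃ς_X(x))` for all `q, x`;
(2) `ς_X(q·x) ≤ ς_Q(q)` for all `q, x` (stability);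
(3) `ς_X(q·1_X) ≤ ς_Q(q)` for all `q`. -/
theorem supported_module_stability_tfae {A Q X : Type*}
    [Order.Frame A] [Order.Frame Q] [Order.Frame X]
    (GQ : BasedGroupoidQuantale A Q) (M : PreHilbertModule GQ X)
    (hQ_stable : ∀ p q : Q, GQ.suppQ (GQ.mul p q) ≤ GQ.suppQ p)
    (hQ_supp_mul_top : ∀ q : Q, GQ.suppQ (GQ.mul q ⊤) = GQ.suppQ q)
    (hQ_lres_top : ∀ q : Q, GQ.lres (GQ.suppQ q) ⊤ = GQ.mul q ⊤)
    (ς : X → A) (hmono : Monotone ς) (hς_top : ς ⊤ = ⊤)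
    (hς_le : ∀ x, M.lres (ς x) ⊤ ≤ M.smul (M.inner x x) ⊤)
    (hς_restrict : ∀ x, M.lres (ς x) x = x) :
    ((∀ (q : Q) (x : X), ς (M.smul q x) = GQ.suppQ (GQ.rres q (ς x))) ↔
        (∀ (q : Q) (x : X), ς (M.smul q x) ≤ GQ.suppQ q)) ∧
      ((∀ (q : Q) (x : X), ς (M.smul q x) ≤ GQ.suppQ q) ↔
        (∀ q : Q, ς (M.smul q ⊤) ≤ GQ.suppQ q)) := by
  have monoS : Monotone GQ.suppQ := mono_of_sSup_eq _ GQ.suppQ_sSup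
  have monoStar : Monotone GQ.star := mono_of_sSup_eq _ GQ.star_sSup
  have monoMulR : ∀ p, Monotone (GQ.mul p) := fun p => mono_of_sSup_eq _ (GQ.mul_sSup_right p)
  have monoRresR : ∀ q, Monotone (GQ.rres q) := fun q => mono_of_sSup_eq _ (GQ.rres_sSup_right q)
  have monoSmulR : ∀ q, Monotone (M.smul q) := fun q => mono_of_sSup_eq _ (M.smul_sSup_right q)
  have monoInnerL : ∀ y : X, Monotone (fun x => M.inner x y) :=
    fun y => mono_of_sSup_eq _ (fun S => M.inner_sSup S y)
  have monoInnerR : ∀ x : X, Monotone (M.inner x) := by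
    intro x a b hab
    rw [M.inner_star x a, M.inner_star x b]
    exact monoStar (monoInnerL x hab)
  have hrres_le : ∀ (q : Q) (a : A), GQ.rres q a ≤ q := fun q a => by
    simpa [GQ.rres_top_act] using monoRresR q (le_top : a ≤ ⊤)
  have hinner_supp : ∀ y : X, GQ.suppQ (M.inner y ⊤) ≤ ς y := by
    intro y
    have h1 : GQ.lres (ς y) (M.inner y ⊤) = M.inner y ⊤ := by
      rw [M.lres_inner, hς_restrict]
    have h2 := GQ.suppQ_equivariant (ς y) (M.inner y ⊤)
    rw [h1] at h2
    rw [h2]; exact inf_le_left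
  have habs : ∀ (q : Q) (x : X), M.smul q x = M.smul (GQ.rres q (ς x)) x := by
    intro q x
    rw [M.rresQ_smul, hς_restrict]
  constructor
  · constructor
    · intro h1 q x
      rw [h1]
      exact monoS (hrres_le q (ς x))
    · intro h2 q x
      apply le_antisymm
      · rw [habs q x]; exact h2 _ _
      · have hetop : M.smul (M.inner ⊤ ⊤) (⊤ : X) = ⊤ := by
          apply le_antisymm le_top
          have h3 := hς_le ⊤
          rwa [hς_top, M.lres_top_act] at h3
        have hse : GQ.suppQ (M.inner ⊤ ⊤) = ⊤ := by
          apply le_antisymm le_top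
          have h3 := h2 (M.inner ⊤ ⊤) ⊤
          rw [hetop, hς_top] at h3; exact h3
        have hetopQ : GQ.mul (M.inner ⊤ ⊤) ⊤ = ⊤ := by
          rw [← hQ_lres_top (M.inner ⊤ ⊤), hse, GQ.lres_top_act]
        have hpe : ∀ p : Q, GQ.suppQ p = GQ.suppQ (GQ.mul p (M.inner ⊤ ⊤)) := by
          intro p
          rw [← hQ_supp_mul_top (GQ.mul p (M.inner ⊤ ⊤)), GQ.mul_assoc, hetopQ,
            hQ_supp_mul_top]
        have step1 : M.smul (GQ.rres q (ς x)) (⊤ : X)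
            ≤ M.smul (GQ.mul q (M.inner x x)) ⊤ := by
          rw [M.rresQ_smul, M.mul_smul]
          exact monoSmulR q (hς_le x)
        have step2 : GQ.mul (GQ.rres q (ς x)) (M.inner ⊤ ⊤)
            ≤ GQ.mul (GQ.mul q (M.inner x x)) (M.inner ⊤ ⊤) := by
          have h3 := monoInnerL (⊤ : X) step1
          simpa [M.inner_smul] using h3
        calc GQ.suppQ (GQ.rres q (ς x))
            = GQ.suppQ (GQ.mul (GQ.rres q (ς x)) (M.inner ⊤ ⊤)) := hpe _
          _ ≤ GQ.suppQ (GQ.mul (GQ.mul q (M.inner x x)) (M.inner ⊤ ⊤)) := monoS step2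
          _ ≤ GQ.suppQ (GQ.mul q (M.inner x x)) := hQ_stable _ _
          _ ≤ GQ.suppQ (GQ.mul q (M.inner x ⊤)) := monoS (monoMulR q (monoInnerR x le_top))
          _ = GQ.suppQ (M.inner (M.smul q x) ⊤) := by rw [M.inner_smul]
          _ ≤ ς (M.smul q x) := hinner_supp _
  · constructor
    · intro h q; exact h q ⊤
    · intro h q x
      exact le_trans (hmono (monoSmulR q le_top)) (h q)
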